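/- There is a sufficiently small absolute constant c > 0 with the following property. Assume μ ≤ c·min{ (1/10)·‖X‖⁻², ‖(𝒜*𝒜 − ℐ)(X*Xᵀ − U_t*U_tᵀ)‖⁻¹ } and ‖U_t‖ ≤ 3‖X‖, that V_Xᵀ*U_t has full tubal rank with all invertible singular tubes, and that ‖V_{X⊥}ᵀ*V_{U_t*W_t}‖ ≤ c·κ⁻¹. Then ‖V_{X⊥}ᵀ*V_{U_{t+1}*W_t}‖ ≤ 2·‖V_{X⊥}ᵀ*V_{U_t*W_t}‖ + 2μ·‖(𝒜*𝒜)(X*Xᵀ − U_t*U_tᵀ)‖; in particular, ‖V_{X⊥}ᵀ*V_{U_{t+1}*W_t}‖ ≤ 1/50. -/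

import Mathlib

open scoped BigOperators ComplexOrder
open MeasureTheory

namespace Tubal

/-- A real tubal tensor of size `m × n × k`. -/
abbrev Tensor (m n k : ℕ) := Fin m → Fin n → Fin k → ℝ

/-- The `j`-th Fourier-domain (frontal) slice of a tubal tensor. -/
noncomputable def slice {m n k : ℕ} (T : Tensor m n k) (j : Fin k) :
    Matrix (Fin m) (Fin n) ℂ := fun i i' =>
  ∑ j' : Fin k, (T i i' j' : ℂ) *
    Complex.exp (-(2 * (Real.pi : ℂ) * Complex.I * ((j : ℕ) : ℂ) * ((j' : ℕ) : ℂ)) / ((k : ℕ) : ℂ))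

/-- The tubal product (t-product) of two tubal tensors. -/
def tprod {m q n k : ℕ} (A : Tensor m q k) (B : Tensor q n k) : Tensor m n k :=
  fun i i' l => ∑ p : Fin q, ∑ l' : Fin k, A i p l' * B p i' (l - l')

/-- The tubal transpose. -/
def ttr {m n k : ℕ} (T : Tensor m n k) : Tensor n m k := fun i i' j => T i' i (-j)

/-- The identity tubal tensor. -/
def tId (n k : ℕ) : Tensor n n k := fun i i' j => if i = i' ∧ (j : ℕ) = 0 then 1 else 0

/-- Frobenius norm of a tubal tensor. -/
noncomputable def frobNorm {m n k : ℕ} (T : Tensor m n k) : ℝ :=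
  Real.sqrt (∑ i, ∑ i', ∑ j, (T i i' j) ^ 2)

/-- Entrywise inner product of tubal tensors. -/
def tinner {m n k : ℕ} (T S : Tensor m n k) : ℝ := ∑ i, ∑ i', ∑ j, T i i' j * S i i' j

/-- ℓ₂-operator norm of a complex matrix. -/
noncomputable def matOpNorm {m n : ℕ} (M : Matrix (Fin m) (Fin n) ℂ) : ℝ :=
  ‖LinearMap.toContinuousLinearMap (Matrix.toEuclideanLin M)‖

/-- Tensor spectral norm: max over Fourier slices of operator norm. -/
noncomputable def specNorm {m n k : ℕ} (T : Tensor m n k) : ℝ :=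
  ⨆ j : Fin k, matOpNorm (slice T j)

/-- `i`-th largest singular value (0-based index into `Fin n`). -/
noncomputable def svalIdx {m n : ℕ} (M : Matrix (Fin m) (Fin n) ℂ) (i : Fin n) : ℝ :=
  Real.sqrt (((Matrix.isHermitian_conjTranspose_mul_self M).eigenvalues)
    ((Tuple.sort ((Matrix.isHermitian_conjTranspose_mul_self M).eigenvalues)) i.rev))

/-- `i`-th largest singular value of a matrix, `1`-based (σ₁ is the largest). -/
noncomputable def sval {m n : ℕ} (M : Matrix (Fin m) (Fin n) ℂ) (i : ℕ) : ℝ :=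
  if h : i - 1 < n then svalIdx M ⟨i - 1, h⟩ else 0

/-- Smallest singular value of an `m × n` matrix. -/
noncomputable def sminMat {m n : ℕ} (M : Matrix (Fin m) (Fin n) ℂ) : ℝ :=
  sval M (min m n)

/-- σ_min of the block-diagonal Fourier representation of a tensor:
the minimum over slices of the smallest singular value. -/
noncomputable def tSMin {m n k : ℕ} (T : Tensor m n k) : ℝ :=
  ⨅ j : Fin k, sminMat (slice T j)

/-- The tubal rank: maximum over slices of the matrix rank. -/
noncomputable def trank {m n k : ℕ} (T : Tensor m n k) : ℕ :=
  Finset.univ.sup fun j : Fin k => (slice T j).rank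

/-- Condition number `κ(T) = σ₁(T̄)/σ_{min{m,n}k}(T̄)`. -/
noncomputable def cond {m n k : ℕ} (T : Tensor m n k) : ℝ := specNorm T / tSMin T

/-- Tensor nuclear norm `(1/k)·Σ_{j,i} σ_i(T̄^{(j)})`. -/
noncomputable def nucNorm {m n k : ℕ} (T : Tensor m n k) : ℝ :=
  (1 / (k : ℝ)) * ∑ j : Fin k, ∑ i : Fin n, svalIdx (slice T j) i

/-- The linear measurement map `𝒜`. -/
def Ameas {n k m : ℕ} (A : Fin m → Tensor n n k) (Z : Tensor n n k) : Fin m → ℝ :=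
  fun i => tinner (A i) Z

/-- `𝒜*𝒜`. -/
def AtA {n k m : ℕ} (A : Fin m → Tensor n n k) (Z : Tensor n n k) : Tensor n n k :=
  fun p q l => ∑ i, tinner (A i) Z * A i p q l

/-- Restricted isometry property of rank `r` with constant `δ`. -/
def RIP {n k m : ℕ} (A : Fin m → Tensor n n k) (r : ℕ) (δ : ℝ) : Prop :=
  ∀ Z : Tensor n n k, ttr Z = Z → trank Z ≤ r →
    (1 - δ) * frobNorm Z ^ 2 ≤ ∑ i, (tinner (A i) Z) ^ 2 ∧
      ∑ i, (tinner (A i) Z) ^ 2 ≤ (1 + δ) * frobNorm Z ^ 2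

/-- Spectral-to-nuclear restricted isometry property. -/
def S2NRIP {n k m : ℕ} (A : Fin m → Tensor n n k) (δ : ℝ) : Prop :=
  ∀ Z : Tensor n n k, ttr Z = Z → specNorm (Z - AtA A Z) ≤ δ * nucNorm Z

/-- One gradient-descent step `U ↦ [𝕀 + μ(𝒜*𝒜)(X*Xᵀ − U*Uᵀ)]*U`. -/
noncomputable def gdStep {n r R k m : ℕ} (A : Fin m → Tensor n n k) (X : Tensor n r k)
    (μ : ℝ) (U : Tensor n R k) : Tensor n R k :=
  tprod (tId n k + μ • AtA A (tprod X (ttr X) - tprod U (ttr U))) U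

/-- Gradient descent iterates. -/
noncomputable def gdIter {n r R k m : ℕ} (A : Fin m → Tensor n n k) (X : Tensor n r k)
    (μ : ℝ) (U0 : Tensor n R k) : ℕ → Tensor n R k
  | 0 => U0
  | t + 1 => gdStep A X μ (gdIter A X μ U0 t)

/-- `t`-fold tubal power. -/
noncomputable def tpow {n k : ℕ} (T : Tensor n n k) : ℕ → Tensor n n k
  | 0 => tId n k
  | t + 1 => tprod T (tpow T t)

/-- Block-diagonal Fourier-domain matrix representation of a tensor. -/
noncomputable def bdiag {m n k : ℕ} (T : Tensor m n k) :
    Matrix (Fin k × Fin m) (Fin k × Fin n) ℂ :=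
  fun p q => if p.1 = q.1 then slice T p.1 p.2 q.2 else 0

/-- ℓ₂ norm of a complex vector. -/
noncomputable def l2norm {ι : Type*} [Fintype ι] (w : ι → ℂ) : ℝ :=
  Real.sqrt (∑ i, Complex.normSq (w i))

/-- i.i.d. Gaussian measure on tubal tensors, each entry `N(0, v)`. -/
noncomputable def gaussianTensor (n R k : ℕ) (v : NNReal) : Measure (Tensor n R k) :=
  Measure.pi fun _ => Measure.pi fun _ => Measure.pi fun _ =>
    ProbabilityTheory.gaussianReal 0 v

/-- The first `r` tensor columns. -/
def cols {a p k : ℕ} (T : Tensor a p k) (r : ℕ) (h : r ≤ p) : Tensor a r k :=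
  fun i s j => T i (Fin.castLE h s) j

/-- `W` is orthonormal: `Wᵀ*W = 𝕀`. -/
def ONB {p q k : ℕ} (W : Tensor p q k) : Prop := tprod (ttr W) W = tId q k

/-- `Q` is an orthogonal tubal tensor. -/
def Orthogonal {p k : ℕ} (Q : Tensor p p k) : Prop :=
  tprod Q (ttr Q) = tId p k ∧ tprod (ttr Q) Q = tId p k

/-- `V` is an orthonormal basis for the tensor-column space of `Y`. -/
def IsColBasis {a b q k : ℕ} (Y : Tensor a b k) (V : Tensor a q k) : Prop :=
  ONB V ∧ tprod V (tprod (ttr V) Y) = Y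

/-- `Vp` is an orthonormal complement of the orthonormal `V`. -/
def IsOrthCompl {a q q' k : ℕ} (V : Tensor a q k) (Vp : Tensor a q' k) : Prop :=
  ONB Vp ∧ tprod (ttr Vp) V = 0 ∧
    tprod V (ttr V) + tprod Vp (ttr Vp) = tId a k

/-- `S` is an f-diagonal tensor with nonnegative, nonincreasing (real) diagonal in
every Fourier slice: the middle factor of a t-SVD. -/
def IsFDiagSorted {p q k : ℕ} (S : Tensor p q k) : Prop :=
  (∀ j : Fin k, ∀ i : Fin p, ∀ i' : Fin q, (i : ℕ) ≠ (i' : ℕ) → slice S j i i' = 0) ∧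
  (∀ j : Fin k, ∀ i : Fin p, ∀ i' : Fin q, (i : ℕ) = (i' : ℕ) →
    (slice S j i i').im = 0 ∧ 0 ≤ (slice S j i i').re) ∧
  (∀ j : Fin k, ∀ i₁ i₂ : Fin p, ∀ i₁' i₂' : Fin q, (i₁ : ℕ) = (i₁' : ℕ) →
    (i₂ : ℕ) = (i₂' : ℕ) → (i₁ : ℕ) ≤ (i₂ : ℕ) →
    (slice S j i₂ i₂').re ≤ (slice S j i₁ i₁').re)

/-- `(V, S, W)` is a t-SVD of `T`. -/
def IsTSVD {p q k : ℕ} (T : Tensor p q k) (V : Tensor p p k) (S : Tensor p q k)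
    (W : Tensor q q k) : Prop :=
  Orthogonal V ∧ Orthogonal W ∧ IsFDiagSorted S ∧ T = tprod V (tprod S (ttr W))


set_option linter.dupNamespace false
open Matrix
set_option maxHeartbeats 1000000

open Matrix in
theorem _conjT_test : True := trivial

variable {m n q k : ℕ}

noncomputable def om (k : ℕ) (j : Fin k) (x : ℕ) : ℂ :=
  Complex.exp (-(2 * (Real.pi : ℂ) * Complex.I * ((j : ℕ) : ℂ) * ((x:ℕ) : ℂ)) / ((k:ℕ) : ℂ))

lemma slice_eq_om (T : Tensor m n k) (j : Fin k) (i : Fin m) (i' : Fin n) :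
    slice T j i i' = ∑ j' : Fin k, (T i i' j' : ℂ) * om k j (j' : ℕ) := rfl

lemma om_add (j : Fin k) (a b : ℕ) : om k j (a + b) = om k j a * om k j b := by
  unfold om
  rw [← Complex.exp_add]
  congr 1
  push_cast
  ring

lemma om_kmul (j : Fin k) (q' : ℕ) : om k j (k * q') = 1 := by
  rcases Nat.eq_zero_or_pos k with hk | hk
  · exact absurd j.2 (by omega)
  have hk' : ((k:ℕ):ℂ) ≠ 0 := Nat.cast_ne_zero.2 hk.ne'
  unfold om
  have : -(2 * (Real.pi : ℂ) * Complex.I * ((j : ℕ) : ℂ) * ((k * q' : ℕ) : ℂ)) / ((k:ℕ) : ℂ)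
      = ((-(j * q' : ℕ) : ℤ) : ℂ) * (2 * Real.pi * Complex.I) := by
    rw [div_eq_iff hk']
    push_cast
    ring
  rw [this, Complex.exp_int_mul_two_pi_mul_I]

lemma om_mod (j : Fin k) (a : ℕ) : om k j (a % k) = om k j a := by
  conv_rhs => rw [← Nat.mod_add_div a k]
  rw [om_add, om_kmul, mul_one]

lemma om_zero (j : Fin k) : om k j 0 = 1 := by
  simp [om]

lemma om_val_add (j : Fin k) (a b : Fin k) :
    om k j ((a + b : Fin k) : ℕ) = om k j (a : ℕ) * om k j (b : ℕ) := by
  rw [Fin.val_add, om_mod, om_add]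

lemma om_conj (j : Fin k) (l : Fin k) :
    om k j ((-l : Fin k) : ℕ) = starRingEnd ℂ (om k j (l : ℕ)) := by
  haveI : NeZero k := ⟨(j.pos).ne'⟩
  have hz : starRingEnd ℂ (om k j (l:ℕ)) = (om k j (l:ℕ))⁻¹ := by
    unfold om
    rw [← Complex.exp_conj, ← Complex.exp_neg]
    congr 1
    simp only [map_div₀, map_neg, _root_.map_mul, Complex.conj_I, Complex.conj_ofReal,
      map_natCast, map_ofNat]
    ring
  have h2 : om k j ((-l : Fin k):ℕ) * om k j (l:ℕ) = 1 := by
    rw [← om_val_add, neg_add_cancel]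
    exact om_zero j
  rw [hz]
  exact eq_inv_of_mul_eq_one_left h2

lemma slice_ttr (T : Tensor m n k) (j : Fin k) :
    slice (ttr T) j = (slice T j)ᴴ := by
  haveI : NeZero k := ⟨(j.pos).ne'⟩
  ext i i'
  rw [Matrix.conjTranspose_apply, slice_eq_om, slice_eq_om, star_sum]
  refine Fintype.sum_equiv (Equiv.neg (Fin k)) _ _ ?_
  intro l
  show ((T i' i (-l) : ℝ) : ℂ) * om k j (l : ℕ)
      = star (((T i' i (-l) : ℝ) : ℂ) * om k j ((-l : Fin k) : ℕ))
  rw [star_mul', om_conj j l, starRingEnd_apply, star_star, ← starRingEnd_apply,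
    Complex.conj_ofReal]

lemma slice_tprod (A : Tensor m q k) (B : Tensor q n k) (j : Fin k) :
    slice (tprod A B) j = slice A j * slice B j := by
  haveI : NeZero k := ⟨(j.pos).ne'⟩
  ext i i'
  rw [Matrix.mul_apply]
  show (∑ j' : Fin k, ((∑ p, ∑ l', A i p l' * B p i' (j' - l') : ℝ) : ℂ) * om k j (j':ℕ)) = _
  push_cast
  simp only [Finset.sum_mul]
  rw [Finset.sum_comm]
  refine Finset.sum_congr rfl ?_
  intro p _
  rw [Finset.sum_comm, slice_eq_om, slice_eq_om, Finset.sum_mul]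
  refine Finset.sum_congr rfl ?_
  intro l' _
  rw [Finset.mul_sum]
  refine Fintype.sum_equiv (Equiv.subRight l') _ _ ?_
  intro l
  show (A i p l' : ℂ) * (B p i' (l - l') : ℂ) * om k j (l : ℕ)
     = (A i p l' : ℂ) * om k j (l' : ℕ) *
       ((B p i' ((Equiv.subRight l') l)) * om k j (((Equiv.subRight l') l : Fin k) : ℕ))
  have hl : (l - l') + l' = l := sub_add_cancel l l'
  have hom : om k j (l:ℕ) = om k j ((l - l' : Fin k):ℕ) * om k j (l':ℕ) := by
    rw [← om_val_add, hl]
  rw [Equiv.subRight_apply, hom]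
  ring

lemma slice_add (S T : Tensor m n k) (j : Fin k) :
    slice (S + T) j = slice S j + slice T j := by
  ext i i'
  rw [Matrix.add_apply, slice_eq_om, slice_eq_om, slice_eq_om, ← Finset.sum_add_distrib]
  refine Finset.sum_congr rfl ?_
  intro l _
  show ((S i i' l + T i i' l : ℝ) : ℂ) * _ = _
  push_cast
  ring

lemma slice_smul (c : ℝ) (T : Tensor m n k) (j : Fin k) :
    slice (c • T) j = (c : ℂ) • slice T j := by
  ext i i'
  rw [Matrix.smul_apply, slice_eq_om, slice_eq_om, Finset.smul_sum]
  refine Finset.sum_congr rfl ?_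
  intro l _
  show ((c * T i i' l : ℝ) : ℂ) * _ = _
  push_cast
  rw [smul_eq_mul]
  ring

lemma slice_tId [NeZero k] (j : Fin k) :
    slice (tId n k) j = (1 : Matrix (Fin n) (Fin n) ℂ) := by
  ext i i'
  rw [slice_eq_om]
  rw [Finset.sum_eq_single (0 : Fin k)]
  · by_cases h : i = i' <;> simp [tId, h, Matrix.one_apply, om_zero]
  · intro b _ hb
    have : ¬ ((b : ℕ) = 0) := fun h => hb (Fin.ext h)
    simp [tId, this]
  · intro h
    exact absurd (Finset.mem_univ _) h

open scoped Matrix.Norms.L2Operator in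
lemma matOpNorm_eq_l2 {a b : ℕ} (A : Matrix (Fin a) (Fin b) ℂ) : matOpNorm A = ‖A‖ := rfl

noncomputable def clm {a b : ℕ} (A : Matrix (Fin a) (Fin b) ℂ) :
    EuclideanSpace ℂ (Fin b) →L[ℂ] EuclideanSpace ℂ (Fin a) :=
  LinearMap.toContinuousLinearMap (Matrix.toEuclideanLin A)

lemma matOpNorm_clm {a b : ℕ} (A : Matrix (Fin a) (Fin b) ℂ) : matOpNorm A = ‖clm A‖ := rfl

lemma clm_apply_le {a b : ℕ} (A : Matrix (Fin a) (Fin b) ℂ) (x : EuclideanSpace ℂ (Fin b)) :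
    ‖clm A x‖ ≤ matOpNorm A * ‖x‖ := (clm A).le_opNorm x

lemma matOpNorm_nonneg {a b : ℕ} (A : Matrix (Fin a) (Fin b) ℂ) : 0 ≤ matOpNorm A :=
  norm_nonneg (clm A)

lemma matOpNorm_le_bound {a b : ℕ} (A : Matrix (Fin a) (Fin b) ℂ) {C : ℝ} (hC : 0 ≤ C)
    (h : ∀ x, ‖clm A x‖ ≤ C * ‖x‖) : matOpNorm A ≤ C :=
  (clm A).opNorm_le_bound hC h

lemma clm_apply_eq {a b : ℕ} (A : Matrix (Fin a) (Fin b) ℂ) (x : EuclideanSpace ℂ (Fin b)) :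
    clm A x = (WithLp.equiv 2 (Fin a → ℂ)).symm (A.mulVec (WithLp.equiv 2 (Fin b → ℂ) x)) :=
  Matrix.toEuclideanLin_apply A x

lemma clm_mul {a b c : ℕ} (A : Matrix (Fin a) (Fin b) ℂ) (B : Matrix (Fin b) (Fin c) ℂ)
    (x : EuclideanSpace ℂ (Fin c)) : clm (A * B) x = clm A (clm B x) := by
  simp only [clm_apply_eq, Equiv.apply_symm_apply, Matrix.mulVec_mulVec]

lemma clm_one {a : ℕ} (x : EuclideanSpace ℂ (Fin a)) :
    clm (1 : Matrix (Fin a) (Fin a) ℂ) x = x := by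
  simp only [clm_apply_eq, Matrix.one_mulVec]
  exact (WithLp.equiv 2 (Fin a → ℂ)).symm_apply_apply x

lemma clm_add {a b : ℕ} (A B : Matrix (Fin a) (Fin b) ℂ) (x : EuclideanSpace ℂ (Fin b)) :
    clm (A + B) x = clm A x + clm B x := by
  unfold clm
  rw [map_add, map_add]
  rfl

lemma clm_smul {a b : ℕ} (c : ℂ) (A : Matrix (Fin a) (Fin b) ℂ) (x : EuclideanSpace ℂ (Fin b)) :
    clm (c • A) x = c • clm A x := by
  unfold clm
  rw [_root_.map_smul, _root_.map_smul]
  rfl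

lemma matOpNorm_mul_le {a b c : ℕ} (A : Matrix (Fin a) (Fin b) ℂ) (B : Matrix (Fin b) (Fin c) ℂ) :
    matOpNorm (A * B) ≤ matOpNorm A * matOpNorm B := by
  refine matOpNorm_le_bound _ (mul_nonneg (matOpNorm_nonneg A) (matOpNorm_nonneg B)) fun x => ?_
  rw [clm_mul]
  calc ‖clm A (clm B x)‖ ≤ matOpNorm A * ‖clm B x‖ := clm_apply_le _ _
    _ ≤ matOpNorm A * (matOpNorm B * ‖x‖) :=
        mul_le_mul_of_nonneg_left (clm_apply_le _ _) (matOpNorm_nonneg A)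
    _ = matOpNorm A * matOpNorm B * ‖x‖ := by ring

open scoped Matrix.Norms.L2Operator in
lemma matOpNorm_conjTranspose {a b : ℕ} (A : Matrix (Fin a) (Fin b) ℂ) :
    matOpNorm Aᴴ = matOpNorm A :=
  (matOpNorm_eq_l2 Aᴴ).trans ((Matrix.l2_opNorm_conjTranspose A).trans (matOpNorm_eq_l2 A).symm)

open scoped Matrix.Norms.L2Operator in
lemma matOpNorm_add_le {a b : ℕ} (A B : Matrix (Fin a) (Fin b) ℂ) :
    matOpNorm (A + B) ≤ matOpNorm A + matOpNorm B := by
  rw [matOpNorm_eq_l2 (A + B), matOpNorm_eq_l2 A, matOpNorm_eq_l2 B]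
  exact norm_add_le _ _

lemma inner_clm_conjT {a b : ℕ} (A : Matrix (Fin a) (Fin b) ℂ) (x : EuclideanSpace ℂ (Fin a))
    (y : EuclideanSpace ℂ (Fin b)) :
    (inner ℂ (clm Aᴴ x) y : ℂ) = inner ℂ x (clm A y) := by
  show (inner ℂ ((Matrix.toEuclideanLin Aᴴ) x) y : ℂ) = inner ℂ x ((Matrix.toEuclideanLin A) y)
  rw [Matrix.toEuclideanLin_conjTranspose_eq_adjoint]
  exact LinearMap.adjoint_inner_left _ _ _

lemma clm_isometry {a b : ℕ} {A : Matrix (Fin a) (Fin b) ℂ} (h : Aᴴ * A = 1)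
    (x : EuclideanSpace ℂ (Fin b)) : ‖clm A x‖ = ‖x‖ := by
  have h1 : (inner ℂ (clm A x) (clm A x) : ℂ) = inner ℂ x x := by
    have h2 := inner_clm_conjT A (clm A x) x
    rw [← clm_mul, h, clm_one] at h2
    exact h2.symm
  rw [@norm_eq_sqrt_re_inner ℂ, @norm_eq_sqrt_re_inner ℂ, h1]

lemma matOpNorm_le_one {a b : ℕ} {A : Matrix (Fin a) (Fin b) ℂ} (h : Aᴴ * A = 1) :
    matOpNorm A ≤ 1 :=
  matOpNorm_le_bound A zero_le_one fun x => by rw [clm_isometry h, one_mul]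

lemma matOpNorm_conjT_le_one {a b : ℕ} {A : Matrix (Fin a) (Fin b) ℂ} (h : Aᴴ * A = 1) :
    matOpNorm Aᴴ ≤ 1 := by
  rw [matOpNorm_conjTranspose]
  exact matOpNorm_le_one h

lemma eigen_abs_le {a : ℕ} {A : Matrix (Fin a) (Fin a) ℂ} (hA : A.IsHermitian) (l : Fin a) :
    |hA.eigenvalues l| ≤ matOpNorm A := by
  set v : EuclideanSpace ℂ (Fin a) := hA.eigenvectorBasis l with hv
  have hv1 : ‖v‖ = 1 := hA.eigenvectorBasis.orthonormal.1 l
  have h1 : clm A v = hA.eigenvalues l • v := by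
    apply (WithLp.equiv 2 (Fin a → ℂ)).injective
    rw [clm_apply_eq, Equiv.apply_symm_apply]
    have hmv := hA.mulVec_eigenvectorBasis l
    exact hmv
  calc |hA.eigenvalues l| = ‖clm A v‖ := by
        rw [h1, norm_smul, hv1, Real.norm_eq_abs, mul_one]
    _ ≤ matOpNorm A * ‖v‖ := clm_apply_le _ _
    _ = matOpNorm A := by rw [hv1, mul_one]

lemma svalIdx_le_matOpNorm {a b : ℕ} (M : Matrix (Fin a) (Fin b) ℂ) (i : Fin b) :
    svalIdx M i ≤ matOpNorm M := by
  unfold svalIdx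
  set l := (Tuple.sort ((Matrix.isHermitian_conjTranspose_mul_self M).eigenvalues)) i.rev
  have h1 : |(Matrix.isHermitian_conjTranspose_mul_self M).eigenvalues l| ≤ matOpNorm (Mᴴ * M) :=
    eigen_abs_le _ l
  have h2 : matOpNorm (Mᴴ * M) ≤ matOpNorm M * matOpNorm M := by
    calc matOpNorm (Mᴴ * M) ≤ matOpNorm Mᴴ * matOpNorm M := matOpNorm_mul_le _ _
      _ = matOpNorm M * matOpNorm M := by rw [matOpNorm_conjTranspose]
  have h3 : (Matrix.isHermitian_conjTranspose_mul_self M).eigenvalues l ≤ matOpNorm M * matOpNorm M :=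
    (le_abs_self _).trans (h1.trans h2)
  calc Real.sqrt ((Matrix.isHermitian_conjTranspose_mul_self M).eigenvalues l)
      ≤ Real.sqrt (matOpNorm M * matOpNorm M) := Real.sqrt_le_sqrt h3
    _ = matOpNorm M := Real.sqrt_mul_self (matOpNorm_nonneg M)

lemma sval_nonneg {a b : ℕ} (M : Matrix (Fin a) (Fin b) ℂ) (i : ℕ) : 0 ≤ sval M i := by
  unfold sval
  split
  · exact Real.sqrt_nonneg _
  · exact le_rfl

lemma sval_le_matOpNorm {a b : ℕ} (M : Matrix (Fin a) (Fin b) ℂ) (i : ℕ) :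
    sval M i ≤ matOpNorm M := by
  unfold sval
  split
  · exact svalIdx_le_matOpNorm M _
  · exact matOpNorm_nonneg M

lemma matOpNorm_slice_le_specNorm {a b : ℕ} (T : Tensor a b k) (j : Fin k) :
    matOpNorm (slice T j) ≤ specNorm T :=
  le_ciSup (f := fun j => matOpNorm (slice T j))
    (Set.Finite.bddAbove (Set.finite_range _)) j

lemma specNorm_nonneg {a b : ℕ} (T : Tensor a b k) : 0 ≤ specNorm T :=
  Real.iSup_nonneg fun j => matOpNorm_nonneg _

lemma specNorm_le_bound {a b : ℕ} [NeZero k] (T : Tensor a b k) {C : ℝ}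
    (h : ∀ j, matOpNorm (slice T j) ≤ C) : specNorm T ≤ C :=
  ciSup_le h

lemma condInv_le_one {a b : ℕ} [NeZero k] (X : Tensor a b k) : (cond X)⁻¹ ≤ 1 := by
  have hs0 : 0 ≤ tSMin X := le_ciInf fun j => sval_nonneg _ _
  rcases eq_or_lt_of_le hs0 with hs | hs
  · rw [cond, ← hs, div_zero, _root_.inv_zero]
    exact zero_le_one
  · have hle : tSMin X ≤ specNorm X := by
      obtain j0 : Fin k := Classical.arbitrary _
      calc tSMin X ≤ sminMat (slice X j0) :=
            ciInf_le (Set.Finite.bddBelow (Set.finite_range _)) j0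
        _ ≤ matOpNorm (slice X j0) := sval_le_matOpNorm _ _
        _ ≤ specNorm X := matOpNorm_slice_le_specNorm X j0
    have h1 : 1 ≤ cond X := (one_le_div hs).mpr hle
    exact inv_le_one_of_one_le₀ h1

lemma rank_full_injective {a b : ℕ} {M : Matrix (Fin a) (Fin b) ℂ} (h : M.rank = b) :
    Function.Injective M.mulVecLin := by
  rw [← LinearMap.ker_eq_bot]
  have h1 := LinearMap.finrank_range_add_finrank_ker M.mulVecLin
  rw [Module.finrank_fin_fun (R := ℂ)] at h1
  have h2 : Module.finrank ℂ (LinearMap.ker M.mulVecLin) = 0 := by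
    have h3 : M.rank = Module.finrank ℂ (LinearMap.range M.mulVecLin) := rfl
    rw [← h3, h] at h1
    omega
  exact Submodule.finrank_eq_zero.mp h2

lemma clm_symm_apply {a b : ℕ} (A : Matrix (Fin a) (Fin b) ℂ) (w : Fin b → ℂ) :
    clm A ((WithLp.equiv 2 (Fin b → ℂ)).symm w)
      = (WithLp.equiv 2 (Fin a → ℂ)).symm (A.mulVec w) := by
  rw [clm_apply_eq, Equiv.apply_symm_apply]

lemma key_slice {a p R r : ℕ}
    (Vp : Matrix (Fin a) (Fin p) ℂ) (Vx : Matrix (Fin a) (Fin r) ℂ)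
    (U : Matrix (Fin a) (Fin R) ℂ) (W : Matrix (Fin R) (Fin r) ℂ)
    (V V' : Matrix (Fin a) (Fin r) ℂ) (M : Matrix (Fin a) (Fin a) ℂ)
    {μ θ mm : ℝ}
    (hμpos : 0 ≤ μ) (hθ0 : 0 ≤ θ) (hmm0 : 0 ≤ mm)
    (hMn : matOpNorm M ≤ mm) (hsmall : μ * mm ≤ 1/2)
    (hV : Vᴴ * V = 1) (hV' : V'ᴴ * V' = 1) (hVpONB : Vpᴴ * Vp = 1)
    (hfact : V * (Vᴴ * (U * W)) = U * W)
    (hrank : (Vxᴴ * U).rank = r)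
    (hWfact : (Vxᴴ * U) * (W * Wᴴ) = Vxᴴ * U)
    (hfact' : V' * (V'ᴴ * ((1 + (μ:ℂ) • M) * U * W)) = (1 + (μ:ℂ) • M) * U * W)
    (hangle : matOpNorm (Vpᴴ * V) ≤ θ) :
    matOpNorm (Vpᴴ * V') ≤ 2 * θ + 2 * (μ * mm) := by
  set G : Matrix (Fin a) (Fin a) ℂ := 1 + (μ:ℂ) • M with hG
  set B : Matrix (Fin a) (Fin r) ℂ := G * V with hB
  set Z : Matrix (Fin r) (Fin r) ℂ := Vᴴ * (U * W) with hZ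
  have hVZ : V * Z = U * W := hfact
  -- rank of U * W
  have hUW_rank : (U * W).rank = r := by
    have e2 : (Vxᴴ * U) * (W * Wᴴ) = (Vxᴴ * (U * W)) * Wᴴ := by
      rw [← Matrix.mul_assoc (Vxᴴ * U) W Wᴴ, Matrix.mul_assoc Vxᴴ U W]
    have e3 : r ≤ (U * W).rank := by
      calc r = (Vxᴴ * U).rank := hrank.symm
        _ = ((Vxᴴ * (U * W)) * Wᴴ).rank := by rw [← e2, hWfact]
        _ ≤ (Vxᴴ * (U * W)).rank := Matrix.rank_mul_le_left _ _
        _ ≤ (U * W).rank := Matrix.rank_mul_le_right _ _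
    exact le_antisymm (Matrix.rank_le_width _) e3
  have hUWinj : Function.Injective (U * W).mulVecLin := rank_full_injective hUW_rank
  have hcomp : (U * W).mulVecLin = V.mulVecLin.comp Z.mulVecLin := by
    rw [← hVZ, Matrix.mulVecLin_mul]
  have hZinj : Function.Injective Z.mulVecLin := by
    intro x y hxy
    apply hUWinj
    rw [hcomp]
    simp only [LinearMap.comp_apply, hxy]
  have hZsurj : LinearMap.range Z.mulVecLin = ⊤ :=
    LinearMap.range_eq_top.mpr (LinearMap.injective_iff_surjective.mp hZinj)
  -- clm G decomposition
  have hGapp : ∀ y : EuclideanSpace ℂ (Fin a), clm G y = y + (μ:ℂ) • clm M y := by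
    intro y
    rw [hG, clm_add, clm_one, clm_smul]
  have hMy : ∀ y : EuclideanSpace ℂ (Fin r),
      ‖(μ:ℂ) • clm M (clm V y)‖ ≤ μ * mm * ‖y‖ := by
    intro y
    rw [norm_smul, Complex.norm_real, Real.norm_eq_abs, abs_of_nonneg hμpos]
    have h1 : ‖clm M (clm V y)‖ ≤ mm * ‖y‖ := by
      calc ‖clm M (clm V y)‖ ≤ matOpNorm M * ‖clm V y‖ := clm_apply_le _ _
        _ = matOpNorm M * ‖y‖ := by rw [clm_isometry hV y]
        _ ≤ mm * ‖y‖ := mul_le_mul_of_nonneg_right hMn (norm_nonneg y)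
    calc μ * ‖clm M (clm V y)‖ ≤ μ * (mm * ‖y‖) := mul_le_mul_of_nonneg_left h1 hμpos
      _ = μ * mm * ‖y‖ := by ring
  have hBlow : ∀ y : EuclideanSpace ℂ (Fin r), (1 - μ * mm) * ‖y‖ ≤ ‖clm B y‖ := by
    intro y
    have h1 : clm B y = clm V y + (μ:ℂ) • clm M (clm V y) := by
      rw [hB, clm_mul, hGapp]
    have h2 : ‖clm V y‖ ≤ ‖clm B y‖ + ‖(μ:ℂ) • clm M (clm V y)‖ := by
      calc ‖clm V y‖ = ‖clm B y - (μ:ℂ) • clm M (clm V y)‖ := by rw [h1]; congr 1; abel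
        _ ≤ ‖clm B y‖ + ‖(μ:ℂ) • clm M (clm V y)‖ := norm_sub_le _ _
    have h3 := hMy y
    have h4 : ‖clm V y‖ = ‖y‖ := clm_isometry hV y
    nlinarith [norm_nonneg (clm B y)]
  have hhalf : (1:ℝ)/2 ≤ 1 - μ * mm := by linarith
  have hBinj : Function.Injective B.mulVecLin := by
    rw [← LinearMap.ker_eq_bot, LinearMap.ker_eq_bot']
    intro w hw
    have h1 : clm B ((WithLp.equiv 2 (Fin r → ℂ)).symm w) = 0 := by
      rw [clm_symm_apply]
      rw [show B.mulVec w = 0 from hw]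
      rfl
    have h2 := hBlow ((WithLp.equiv 2 (Fin r → ℂ)).symm w)
    rw [h1, norm_zero] at h2
    have h4 : ‖(WithLp.equiv 2 (Fin r → ℂ)).symm w‖ = 0 := by
      have h5 : 0 ≤ ‖(WithLp.equiv 2 (Fin r → ℂ)).symm w‖ := norm_nonneg _
      nlinarith
    have h6 : (WithLp.equiv 2 (Fin r → ℂ)).symm w = 0 := norm_eq_zero.mp h4
    calc w = (WithLp.equiv 2 (Fin r → ℂ)) ((WithLp.equiv 2 (Fin r → ℂ)).symm w) :=
          (Equiv.apply_symm_apply _ _).symm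
      _ = 0 := by rw [h6]; rfl
  have hrangeB : Module.finrank ℂ (LinearMap.range B.mulVecLin) = r := by
    rw [LinearMap.finrank_range_of_inj hBinj, Module.finrank_fin_fun]
  have hY'eq : (1 + (μ:ℂ) • M) * U * W = B * Z := by
    rw [← hG, Matrix.mul_assoc G U W, ← hVZ, ← Matrix.mul_assoc G V Z, ← hB]
  have hrangeY' : LinearMap.range (B * Z).mulVecLin = LinearMap.range B.mulVecLin := by
    rw [Matrix.mulVecLin_mul, LinearMap.range_comp, hZsurj, Submodule.map_top]
  have hsub : LinearMap.range B.mulVecLin ≤ LinearMap.range V'.mulVecLin := by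
    rw [← hrangeY']
    rintro v ⟨w, rfl⟩
    refine ⟨(V'ᴴ * ((1 + (μ:ℂ) • M) * U * W)).mulVec w, ?_⟩
    rw [Matrix.mulVecLin_apply, Matrix.mulVecLin_apply, Matrix.mulVec_mulVec, hfact', hY'eq]
  have hfr' : Module.finrank ℂ (LinearMap.range V'.mulVecLin) ≤ r := Matrix.rank_le_width V'
  have heq : LinearMap.range B.mulVecLin = LinearMap.range V'.mulVecLin :=
    Submodule.eq_of_le_of_finrank_le hsub (by rw [hrangeB]; exact hfr')
  -- final bound
  have hbound0 : (0:ℝ) ≤ 2 * θ + 2 * (μ * mm) := by positivity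
  refine matOpNorm_le_bound _ hbound0 fun x => ?_
  have hx : V'.mulVec (WithLp.equiv 2 (Fin r → ℂ) x) ∈ LinearMap.range B.mulVecLin := by
    rw [heq]
    exact ⟨WithLp.equiv 2 (Fin r → ℂ) x, Matrix.mulVecLin_apply _ _⟩
  obtain ⟨wf, hwf⟩ := hx
  set y : EuclideanSpace ℂ (Fin r) := (WithLp.equiv 2 (Fin r → ℂ)).symm wf with hy
  have hBy : clm B y = clm V' x := by
    rw [hy, clm_symm_apply, clm_apply_eq]
    exact congrArg _ hwf
  have hyn : ‖y‖ ≤ 2 * ‖x‖ := by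
    have h1 := hBlow y
    rw [hBy, clm_isometry hV'] at h1
    nlinarith [norm_nonneg y, norm_nonneg x]
  have hdecomp : clm (Vpᴴ * V') x
      = clm (Vpᴴ * V) y + (μ:ℂ) • clm Vpᴴ (clm M (clm V y)) := by
    rw [clm_mul, ← hBy, hB, clm_mul, hGapp, map_add, (clm Vpᴴ).map_smul, clm_mul]
  have hVpn : matOpNorm Vpᴴ ≤ 1 := matOpNorm_conjT_le_one hVpONB
  have hterm2 : ‖(μ:ℂ) • clm Vpᴴ (clm M (clm V y))‖ ≤ μ * mm * ‖y‖ := by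
    rw [norm_smul, Complex.norm_real, Real.norm_eq_abs, abs_of_nonneg hμpos]
    have h1 : ‖clm Vpᴴ (clm M (clm V y))‖ ≤ ‖clm M (clm V y)‖ := by
      calc ‖clm Vpᴴ (clm M (clm V y))‖ ≤ matOpNorm Vpᴴ * ‖clm M (clm V y)‖ := clm_apply_le _ _
        _ ≤ 1 * ‖clm M (clm V y)‖ := mul_le_mul_of_nonneg_right hVpn (norm_nonneg _)
        _ = ‖clm M (clm V y)‖ := one_mul _
    have h2 : ‖clm M (clm V y)‖ ≤ mm * ‖y‖ := by
      calc ‖clm M (clm V y)‖ ≤ matOpNorm M * ‖clm V y‖ := clm_apply_le _ _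
        _ = matOpNorm M * ‖y‖ := by rw [clm_isometry hV y]
        _ ≤ mm * ‖y‖ := mul_le_mul_of_nonneg_right hMn (norm_nonneg y)
    calc μ * ‖clm Vpᴴ (clm M (clm V y))‖ ≤ μ * (mm * ‖y‖) :=
          mul_le_mul_of_nonneg_left (h1.trans h2) hμpos
      _ = μ * mm * ‖y‖ := by ring
  have hterm1 : ‖clm (Vpᴴ * V) y‖ ≤ θ * ‖y‖ := by
    calc ‖clm (Vpᴴ * V) y‖ ≤ matOpNorm (Vpᴴ * V) * ‖y‖ := clm_apply_le _ _
      _ ≤ θ * ‖y‖ := mul_le_mul_of_nonneg_right hangle (norm_nonneg y)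
  calc ‖clm (Vpᴴ * V') x‖
      ≤ ‖clm (Vpᴴ * V) y‖ + ‖(μ:ℂ) • clm Vpᴴ (clm M (clm V y))‖ := by
        rw [hdecomp]; exact norm_add_le _ _
    _ ≤ θ * ‖y‖ + μ * mm * ‖y‖ := add_le_add hterm1 hterm2
    _ = (θ + μ * mm) * ‖y‖ := by ring
    _ ≤ (θ + μ * mm) * (2 * ‖x‖) := by
        apply mul_le_mul_of_nonneg_left hyn
        positivity
    _ = (2 * θ + 2 * (μ * mm)) * ‖x‖ := by ring

lemma slice_sub {a b : ℕ} (S T : Tensor a b k) (j : Fin k) :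
    slice (S - T) j = slice S j - slice T j := by
  ext i i'
  rw [Matrix.sub_apply, slice_eq_om, slice_eq_om, slice_eq_om, ← Finset.sum_sub_distrib]
  refine Finset.sum_congr rfl ?_
  intro l _
  show ((S i i' l - T i i' l : ℝ) : ℂ) * _ = _
  push_cast
  ring

open scoped Matrix.Norms.L2Operator in
lemma matOpNorm_sub_le {a b : ℕ} (A B : Matrix (Fin a) (Fin b) ℂ) :
    matOpNorm (A - B) ≤ matOpNorm A + matOpNorm B := by
  rw [matOpNorm_eq_l2 (A - B), matOpNorm_eq_l2 A, matOpNorm_eq_l2 B]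
  exact norm_sub_le _ _

lemma ONB_slice {a b : ℕ} [NeZero k] {V : Tensor a b k} (h : ONB V) (j : Fin k) :
    (slice V j)ᴴ * slice V j = 1 := by
  have h1 := congrArg (fun T => slice T j) h
  simp only [slice_tprod, slice_ttr, slice_tId] at h1
  exact h1

lemma specNorm_tprod_sq_le {a b : ℕ} [NeZero k] (X : Tensor a b k) (j : Fin k) :
    matOpNorm (slice (tprod X (ttr X)) j) ≤ specNorm X * specNorm X := by
  rw [slice_tprod, slice_ttr]
  calc matOpNorm (slice X j * (slice X j)ᴴ)
      ≤ matOpNorm (slice X j) * matOpNorm (slice X j)ᴴ := matOpNorm_mul_le _ _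
    _ = matOpNorm (slice X j) * matOpNorm (slice X j) := by rw [matOpNorm_conjTranspose]
    _ ≤ specNorm X * specNorm X :=
        mul_le_mul (matOpNorm_slice_le_specNorm X j) (matOpNorm_slice_le_specNorm X j)
          (matOpNorm_nonneg _) (specNorm_nonneg X)

/-- There is a small absolute constant `c > 0` such that, under the
stated conditions, `‖V_{X⊥}ᵀ*V_{U_{t+1}*W_t}‖ ≤ 2‖V_{X⊥}ᵀ*V_{U_t*W_t}‖
 + 2μ‖(𝒜*𝒜)(X*Xᵀ − U_t*U_tᵀ)‖`, and in particular `‖V_{X⊥}ᵀ*V_{U_{t+1}*W_t}‖ ≤ 1/50`. -/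
theorem statement11 :
    ∃ c : ℝ, 0 < c ∧
    ∀ (n r R k m : ℕ) (_hr : r ≤ n) (_hrR : r ≤ R)
      (A : Fin m → Tensor n n k) (_hAsym : ∀ i, ttr (A i) = A i)
      (X : Tensor n r k) (_hrank : trank X = r)
      (μ : ℝ) (_hμ0 : 0 < μ) (U : Tensor n R k)
      (VX : Tensor n r k) (_hVX : IsColBasis X VX)
      (VXp : Tensor n (n - r) k) (_hVXp : IsOrthCompl VX VXp)
      (W : Tensor R r k) (_hW : ONB W)
      (_hWfact : tprod (tprod (ttr VX) U) (tprod W (ttr W)) = tprod (ttr VX) U)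
      (Wp : Tensor R (R - r) k) (_hWp : IsOrthCompl W Wp)
      (VUW : Tensor n r k) (_hVUW : IsColBasis (tprod U W) VUW)
      (_hμ : μ ≤ c * min ((1 / 10) * (specNorm X ^ 2)⁻¹)
          ((specNorm (AtA A (tprod X (ttr X) - tprod U (ttr U)) -
            (tprod X (ttr X) - tprod U (ttr U))))⁻¹))
      (_hU : specNorm U ≤ 3 * specNorm X)
      (_hfull : ∀ j : Fin k, (slice (tprod (ttr VX) U) j).rank = r)
      (_hangle : specNorm (tprod (ttr VXp) VUW) ≤ c * (cond X)⁻¹),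
      ∀ VUpW : Tensor n r k, IsColBasis (tprod (gdStep A X μ U) W) VUpW →
        specNorm (tprod (ttr VXp) VUpW) ≤
          2 * specNorm (tprod (ttr VXp) VUW) +
            2 * μ * specNorm (AtA A (tprod X (ttr X) - tprod U (ttr U))) ∧
        specNorm (tprod (ttr VXp) VUpW) ≤ 1 / 50 := by
  refine ⟨1/300, by norm_num, ?_⟩
  intro n r R k m _hr _hrR A _hAsym X _hrank μ _hμ0 U VX _hVX VXp _hVXp W _hW _hWfact Wp _hWp
    VUW _hVUW _hμ _hU _hfull _hangle VUpW hVUpW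
  rcases Nat.eq_zero_or_pos k with hk0 | hkpos
  · subst hk0
    have hz : ∀ {a b : ℕ} (T : Tensor a b 0), specNorm T = 0 := fun T =>
      Real.iSup_of_isEmpty _
    constructor
    · rw [hz, hz, hz]
      norm_num
    · rw [hz]
      norm_num
  haveI : NeZero k := ⟨hkpos.ne'⟩
  set c : ℝ := 1/300 with hc
  set D : Tensor n n k := tprod X (ttr X) - tprod U (ttr U) with hD
  set Mt : Tensor n n k := AtA A D with hMt
  set Et : Tensor n n k := Mt - D with hEt
  have hμa : μ ≤ c * (1 / 10 * (specNorm X ^ 2)⁻¹) :=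
    le_trans _hμ (mul_le_mul_of_nonneg_left (min_le_left _ _) (by norm_num [hc]))
  have hμb : μ ≤ c * (specNorm Et)⁻¹ :=
    le_trans _hμ (mul_le_mul_of_nonneg_left (min_le_right _ _) (by norm_num [hc]))
  have hsX : 0 < specNorm X ^ 2 := by
    by_contra h
    push_neg at h
    have h0 : specNorm X ^ 2 = 0 := le_antisymm h (by positivity)
    rw [h0] at hμa
    simp at hμa
    linarith
  have hsq : specNorm X ^ 2 = specNorm X * specNorm X := sq (specNorm X)
  have hD10 : specNorm D ≤ 10 * specNorm X ^ 2 := by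
    apply specNorm_le_bound
    intro j
    rw [hD, slice_sub]
    have h1 := matOpNorm_sub_le (slice (tprod X (ttr X)) j) (slice (tprod U (ttr U)) j)
    have h2 := specNorm_tprod_sq_le X j
    have h3 := specNorm_tprod_sq_le U j
    have h5 : (0:ℝ) ≤ 3 * specNorm X := le_trans (specNorm_nonneg U) _hU
    have h4 : specNorm U * specNorm U ≤ (3 * specNorm X) * (3 * specNorm X) :=
      mul_le_mul _hU _hU (specNorm_nonneg U) h5
    nlinarith
  have hμD : μ * specNorm D ≤ c := by
    have h1 : 0 ≤ specNorm D := specNorm_nonneg D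
    have h2 : μ * specNorm D ≤ (c * (1 / 10 * (specNorm X ^ 2)⁻¹)) * (10 * specNorm X ^ 2) := by
      apply mul_le_mul hμa hD10 h1
      have : (0:ℝ) < (specNorm X ^ 2)⁻¹ := inv_pos.mpr hsX
      rw [hc]
      positivity
    have h3 : (c * (1 / 10 * (specNorm X ^ 2)⁻¹)) * (10 * specNorm X ^ 2) = c := by
      field_simp
      exact div_self (fun h => by rw [h] at hsX; norm_num at hsX)
    exact h2.trans (le_of_eq h3)
  have hμE : μ * specNorm Et ≤ c := by
    rcases eq_or_lt_of_le (specNorm_nonneg Et) with h | h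
    · rw [← h, mul_zero, hc]
      norm_num
    · have h2 : μ * specNorm Et ≤ (c * (specNorm Et)⁻¹) * specNorm Et :=
        mul_le_mul_of_nonneg_right hμb h.le
      have h3 : (c * (specNorm Et)⁻¹) * specNorm Et = c := by
        field_simp
      exact h2.trans (le_of_eq h3)
  have hMtED : specNorm Mt ≤ specNorm Et + specNorm D := by
    apply specNorm_le_bound
    intro j
    have hMt2 : Mt = Et + D := by
      rw [hEt, sub_add_cancel]
    calc matOpNorm (slice Mt j) = matOpNorm (slice Et j + slice D j) := by
          rw [← slice_add, ← hMt2]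
      _ ≤ matOpNorm (slice Et j) + matOpNorm (slice D j) := matOpNorm_add_le _ _
      _ ≤ specNorm Et + specNorm D :=
          add_le_add (matOpNorm_slice_le_specNorm _ _) (matOpNorm_slice_le_specNorm _ _)
  have hμm : μ * specNorm Mt ≤ 2 * c := by
    have h1 := mul_le_mul_of_nonneg_left hMtED (le_of_lt _hμ0)
    nlinarith
  have hθc : specNorm (tprod (ttr VXp) VUW) ≤ c := by
    have h1 := condInv_le_one (k := k) X
    calc specNorm (tprod (ttr VXp) VUW) ≤ c * (cond X)⁻¹ := _hangle
      _ ≤ c * 1 := mul_le_mul_of_nonneg_left h1 (by norm_num [hc])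
      _ = c := mul_one c
  have hsmall' : μ * specNorm Mt ≤ 1/2 := by
    rw [hc] at hμm
    linarith
  have hmain : specNorm (tprod (ttr VXp) VUpW) ≤
      2 * specNorm (tprod (ttr VXp) VUW) + 2 * (μ * specNorm Mt) := by
    apply specNorm_le_bound
    intro j
    rw [slice_tprod, slice_ttr]
    have hfactS : slice VUW j * ((slice VUW j)ᴴ * (slice U j * slice W j))
        = slice U j * slice W j := by
      have h1 := congrArg (fun T => slice T j) _hVUW.2
      simpa only [slice_tprod, slice_ttr] using h1
    have hrankS : ((slice VX j)ᴴ * slice U j).rank = r := by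
      have h1 := _hfull j
      rw [slice_tprod, slice_ttr] at h1
      exact h1
    have hWfactS : ((slice VX j)ᴴ * slice U j) * (slice W j * (slice W j)ᴴ)
        = (slice VX j)ᴴ * slice U j := by
      have h1 := congrArg (fun T => slice T j) _hWfact
      simpa only [slice_tprod, slice_ttr] using h1
    have hgd : slice (gdStep A X μ U) j = (1 + (μ:ℂ) • slice Mt j) * slice U j := by
      simp only [gdStep, ← hD, ← hMt]
      rw [slice_tprod, slice_add, slice_tId, slice_smul]
    have hfact'S : slice VUpW j * ((slice VUpW j)ᴴ *
          ((1 + (μ:ℂ) • slice Mt j) * slice U j * slice W j))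
        = (1 + (μ:ℂ) • slice Mt j) * slice U j * slice W j := by
      have h1 := congrArg (fun T => slice T j) hVUpW.2
      simp only [slice_tprod, slice_ttr] at h1
      rw [hgd] at h1
      exact h1
    have hangleS : matOpNorm ((slice VXp j)ᴴ * slice VUW j)
        ≤ specNorm (tprod (ttr VXp) VUW) := by
      have h1 := matOpNorm_slice_le_specNorm (tprod (ttr VXp) VUW) j
      rw [slice_tprod, slice_ttr] at h1
      exact h1
    exact key_slice _ _ _ _ _ _ _ (le_of_lt _hμ0) (specNorm_nonneg _) (specNorm_nonneg Mt)
      (matOpNorm_slice_le_specNorm Mt j) hsmall' (ONB_slice _hVUW.1 j) (ONB_slice hVUpW.1 j)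
      (ONB_slice _hVXp.1 j) hfactS hrankS hWfactS hfact'S hangleS
  constructor
  · linarith
  · rw [hc] at hθc hμm
    linarith

end Tubal
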